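/- Let f be an L(U)-valued function holomorphic on Ω_N satisfying the four sign conditions: f(z)+f(z)* ≥ 0 on Π^N, f(z)+f(z)* ≤ 0 on (−Π)^N, i(f(z)*−f(z)) ≥ 0 on (iΠ)^N, and i(f(z)*−f(z)) ≤ 0 on (−iΠ)^N. Then f is homogeneous of degree one: f(λz) = λ f(z) for all λ ∈ ℂ \ {0} and z ∈ Ω_N. -/

import Mathlib

open ContinuousLinearMap

/-- `Ω_N = ⋃_{λ ∈ 𝕋} (λΠ)^N`, where `Π` is the open right half-plane. -/
def Omega (N : ℕ) : Set (Fin N → ℂ) :=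
  {z | ∃ l : ℂ, ‖l‖ = 1 ∧ ∀ k, ∃ w : ℂ, 0 < w.re ∧ z k = l * w}

open Complex Set Filter Bornology

lemma pi_mem_omega {N : ℕ} {z : Fin N → ℂ} (hz : ∀ k, 0 < (z k).re) : z ∈ Omega N :=
  ⟨1, by simp, fun k => ⟨z k, hz k, by simp⟩⟩

lemma omega_smul {N : ℕ} {z : Fin N → ℂ} (hz : z ∈ Omega N) {μ : ℂ} (hμ : μ ≠ 0) :
    μ • z ∈ Omega N := by
  obtain ⟨l, hl, hw⟩ := hz
  have habs : (0:ℝ) < ‖μ‖ := by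
    simpa using hμ
  refine ⟨μ / (‖μ‖ : ℂ) * l, ?_, fun k => ?_⟩
  · rw [norm_mul, norm_div, hl]
    simp [abs_of_pos habs, div_self habs.ne']
  · obtain ⟨w, hwre, hzw⟩ := hw k
    refine ⟨(‖μ‖ : ℂ) * w, ?_, ?_⟩
    · simpa using mul_pos habs hwre
    · have : ((‖μ‖ : ℂ)) ≠ 0 := by exact_mod_cast habs.ne'
      field_simp [Pi.smul_apply, smul_eq_mul, hzw]
      rw [Pi.smul_apply, smul_eq_mul, hzw]; ring

lemma omega_isOpen (N : ℕ) : IsOpen (Omega N) := by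
  rw [isOpen_iff_mem_nhds]
  rintro z ⟨l, hl, hw⟩
  have hlconj : l * (starRingEnd ℂ) l = 1 := by
    rw [Complex.mul_conj, Complex.normSq_eq_norm_sq, hl]; norm_num
  have hsub : {z' : Fin N → ℂ | ∀ k, 0 < (z' k * (starRingEnd ℂ) l).re} ⊆ Omega N := by
    intro z' hz'
    refine ⟨l, hl, fun k => ⟨z' k * (starRingEnd ℂ) l, hz' k, ?_⟩⟩
    rw [show l * (z' k * (starRingEnd ℂ) l) = z' k * (l * (starRingEnd ℂ) l) by ring, hlconj,
      mul_one]
  refine Filter.mem_of_superset ?_ hsub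
  have hopen : IsOpen {z' : Fin N → ℂ | ∀ k, 0 < (z' k * (starRingEnd ℂ) l).re} := by
    rw [show {z' : Fin N → ℂ | ∀ k, 0 < (z' k * (starRingEnd ℂ) l).re}
        = ⋂ k, {z' : Fin N → ℂ | 0 < (z' k * (starRingEnd ℂ) l).re} by ext; simp]
    refine isOpen_iInter_of_finite fun k => ?_
    exact isOpen_lt continuous_const
      (Complex.continuous_re.comp ((continuous_apply k).mul continuous_const))
  refine hopen.mem_nhds fun k => ?_
  obtain ⟨w, hwre, hzw⟩ := hw k
  rw [hzw, show l * w * (starRingEnd ℂ) l = w * (l * (starRingEnd ℂ) l) by ring, hlconj, mul_one]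
  exact hwre

/-- points of `(1,2)` give frequent vanishing near `1`. -/
lemma freq_zero {E : Type*} [NormedAddCommGroup E] (G : ℂ → E)
    (hz : ∀ r : ℝ, 1 < r → r < 2 → G r = 0) :
    ∃ᶠ w in nhdsWithin (1:ℂ) {(1:ℂ)}ᶜ, G w = 0 := by
  rw [Filter.frequently_iff]
  intro V hV
  rcases Metric.mem_nhdsWithin_iff.1 hV with ⟨ε, hε, hsub⟩
  set r : ℝ := 1 + min ε 1 / 2 with hr
  have hmin : 0 < min ε 1 := lt_min hε one_pos
  have h1r : 1 < r := by simp [hr]; positivity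
  have hr2 : r < 2 := by
    have : min ε 1 ≤ 1 := min_le_right _ _
    simp only [hr]; linarith
  refine ⟨(r:ℂ), hsub ⟨?_, ?_⟩, hz r h1r hr2⟩
  · rw [Metric.mem_ball, Complex.dist_eq]
    have : (r:ℂ) - 1 = ((r - 1 : ℝ) : ℂ) := by push_cast; ring
    rw [this, Complex.norm_real, Real.norm_eq_abs, abs_of_pos (by linarith)]
    have : min ε 1 ≤ ε := min_le_left _ _
    simp only [hr]; linarith
  · simp only [Set.mem_compl_iff, Set.mem_singleton_iff]
    intro h
    have : (r:ℝ) = 1 := by exact_mod_cast h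
    linarith

/-- One-dimensional identity theorem from vanishing on `(1,2)`. -/
lemma eqOn_zero_one_dim {E : Type*} [NormedAddCommGroup E] [NormedSpace ℂ E] [CompleteSpace E]
    {G : ℂ → E} {S : Set ℂ} (hS : IsOpen S) (hSc : IsPreconnected S) (h1S : (1:ℂ) ∈ S)
    (hG : DifferentiableOn ℂ G S) (hz : ∀ r : ℝ, 1 < r → r < 2 → G r = 0) :
    Set.EqOn G 0 S :=
  (hG.analyticOnNhd hS).eqOn_zero_of_preconnected_of_frequently_eq_zero hSc h1S (freq_zero G hz)

/-- The key one-variable lemma: a function holomorphic on `ℂ*` mapping the four open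
half-planes into the corresponding closed half-planes is linear. -/
lemma quadrant_lemma {g : ℂ → ℂ} (hg : ∀ c : ℂ, c ≠ 0 → DifferentiableAt ℂ g c)
    (hre : ∀ c : ℂ, 0 < c.re → 0 ≤ (g c).re)
    (hre' : ∀ c : ℂ, c.re < 0 → (g c).re ≤ 0)
    (him : ∀ c : ℂ, 0 < c.im → 0 ≤ (g c).im)
    (him' : ∀ c : ℂ, c.im < 0 → (g c).im ≤ 0) :
    ∀ c : ℂ, c ≠ 0 → g c = c * g 1 := by
  set h : ℂ → ℂ := fun c => g c / c with hh
  have hre_h : ∀ c : ℂ, c ≠ 0 → 0 ≤ (h c).re := by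
    intro c hc
    have h1 : 0 ≤ (g c).re * c.re := by
      rcases lt_trichotomy c.re 0 with h | h | h
      · have := hre' c h; nlinarith
      · simp [h]
      · exact mul_nonneg (hre c h) h.le
    have h2 : 0 ≤ (g c).im * c.im := by
      rcases lt_trichotomy c.im 0 with h | h | h
      · have := him' c h; nlinarith
      · simp [h]
      · exact mul_nonneg (him c h) h.le
    rw [hh]
    simp only [Complex.div_re]
    have := Complex.normSq_nonneg c
    positivity
  have hden : ∀ c : ℂ, c ≠ 0 → 1 + h c ≠ 0 := by
    intro c hc h0
    have : (1 + h c).re = 0 := by rw [h0]; simp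
    rw [Complex.add_re, Complex.one_re] at this
    have := hre_h c hc
    linarith
  set H : ℂ → ℂ := fun c => (1 - h c) / (1 + h c) with hH
  have hdh : ∀ c : ℂ, c ≠ 0 → DifferentiableAt ℂ h c := fun c hc =>
    (hg c hc).div differentiableAt_id hc
  have hdH : ∀ c : ℂ, c ≠ 0 → DifferentiableAt ℂ H c := fun c hc =>
    ((differentiableAt_const 1).sub (hdh c hc)).div
      ((differentiableAt_const 1).add (hdh c hc)) (hden c hc)
  have hHle : ∀ c : ℂ, c ≠ 0 → ‖H c‖ ≤ 1 := by
    intro c hc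
    rw [hH]
    simp only [norm_div]
    rw [div_le_one (by simpa using hden c hc)]
    have h1 : Complex.normSq (1 - h c) ≤ Complex.normSq (1 + h c) := by
      simp only [Complex.normSq_apply, Complex.sub_re, Complex.sub_im, Complex.add_re,
        Complex.add_im, Complex.one_re, Complex.one_im]
      have := hre_h c hc
      nlinarith
    have := Real.sqrt_le_sqrt h1
    simpa [Complex.norm_def] using this
  -- removable singularity at 0
  set L : ℂ := limUnder (nhdsWithin (0:ℂ) {(0:ℂ)}ᶜ) H with hL
  have hdiffset : DifferentiableOn ℂ H ((Set.univ : Set ℂ) \ {0}) := by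
    intro c hc
    exact (hdH c hc.2).differentiableWithinAt
  have hbdd : BddAbove (norm ∘ H '' ((Set.univ : Set ℂ) \ {0})) := by
    refine ⟨1, ?_⟩
    rintro y ⟨c, hc, rfl⟩
    exact hHle c hc.2
  have hupd : DifferentiableOn ℂ (Function.update H 0 L) Set.univ :=
    Complex.differentiableOn_update_limUnder_of_bddAbove Filter.univ_mem hdiffset hbdd
  have hent : Differentiable ℂ (Function.update H 0 L) := differentiableOn_univ.mp hupd
  have hLnorm : ‖L‖ ≤ 1 := by
    have hcont : Filter.Tendsto (Function.update H 0 L) (nhds (0:ℂ)) (nhds L) := by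
      have := (hent 0).continuousAt.tendsto
      simpa [Function.update_self] using this
    have htend : Filter.Tendsto H (nhdsWithin (0:ℂ) {(0:ℂ)}ᶜ) (nhds L) := by
      refine (hcont.mono_left nhdsWithin_le_nhds).congr' ?_
      filter_upwards [self_mem_nhdsWithin] with c hc
      exact Function.update_of_ne hc L H
    refine le_of_tendsto htend.norm ?_
    filter_upwards [self_mem_nhdsWithin] with c hc
    exact hHle c hc
  have hrange : IsBounded (Set.range (Function.update H 0 L)) := by
    rw [isBounded_iff_forall_norm_le]
    refine ⟨1, ?_⟩
    rintro y ⟨c, rfl⟩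
    by_cases hc : c = 0
    · subst hc; rw [Function.update_self]; exact hLnorm
    · rw [Function.update_of_ne hc]; exact hHle c hc
  have hconst : ∀ c : ℂ, c ≠ 0 → H c = H 1 := by
    intro c hc
    have := hent.apply_eq_apply_of_bounded hrange c 1
    rwa [Function.update_of_ne hc, Function.update_of_ne one_ne_zero] at this
  intro c hc
  have hHeq := hconst c hc
  rw [hH] at hHeq
  have hcross : (1 - h c) * (1 + h 1) = (1 - h 1) * (1 + h c) :=
    (div_eq_div_iff (hden c hc) (hden 1 one_ne_zero)).1 hHeq
  have hhc : h c = h 1 := by linear_combination (-(1:ℂ)/2) * hcross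
  have h2 : g c / c = g 1 / 1 := hhc
  rw [div_one] at h2
  rw [(div_eq_iff hc).1 h2]
  ring

theorem stmt_15 {U : Type*} [NormedAddCommGroup U] [InnerProductSpace ℂ U] [CompleteSpace U]
    (N : ℕ) (f : (Fin N → ℂ) → (U →L[ℂ] U))
    (hf : DifferentiableOn ℂ f (Omega N))
    (h1 : ∀ z : Fin N → ℂ, (∀ k, 0 < (z k).re) →
      (f z + ContinuousLinearMap.adjoint (f z)).IsPositive)
    (h2 : ∀ z : Fin N → ℂ, (∀ k, (z k).re < 0) →
      (-(f z + ContinuousLinearMap.adjoint (f z))).IsPositive)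
    (h3 : ∀ z : Fin N → ℂ, (∀ k, 0 < (z k).im) →
      (Complex.I • (ContinuousLinearMap.adjoint (f z) - f z)).IsPositive)
    (h4 : ∀ z : Fin N → ℂ, (∀ k, (z k).im < 0) →
      (-(Complex.I • (ContinuousLinearMap.adjoint (f z) - f z))).IsPositive) :
    ∀ l : ℂ, l ≠ 0 → ∀ z ∈ Omega N, f (l • z) = l • f z := by
  have hOpen := omega_isOpen N
  -- Step A: homogeneity at points with positive real coordinates
  have stepA : ∀ (μ : ℂ), μ ≠ 0 → ∀ x : Fin N → ℂ,
      (∀ k, 0 < (x k).re ∧ (x k).im = 0) → f (μ • x) = μ • f x := by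
    intro μ hμ x hx
    have hxo : ∀ c : ℂ, c ≠ 0 → c • x ∈ Omega N := fun c hc =>
      omega_smul (pi_mem_omega fun k => (hx k).1) hc
    have key : ∀ u : U, (inner ℂ u ((f (μ • x) - μ • f x) u) : ℂ) = 0 := by
      intro u
      set g : ℂ → ℂ := fun c => (inner ℂ u (f (c • x) u) : ℂ) with hg
      have hgd : ∀ c : ℂ, c ≠ 0 → DifferentiableAt ℂ g c := by
        intro c hc
        have hfd : DifferentiableAt ℂ f (c • x) :=
          hf.differentiableAt (hOpen.mem_nhds (hxo c hc))
        have d1 : DifferentiableAt ℂ (fun c : ℂ => c • x) c :=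
          differentiableAt_id.smul_const x
        have d2 : DifferentiableAt ℂ (fun c : ℂ => f (c • x)) c := hfd.comp c d1
        have d3 : DifferentiableAt ℂ (fun c : ℂ => f (c • x) u) c :=
          d2.clm_apply (differentiableAt_const u)
        have heq : g = fun c : ℂ => innerSL ℂ u (f (c • x) u) := by
          funext c; simp [hg]
        rw [heq]
        exact (innerSL ℂ u).differentiableAt.comp c d3
      -- coordinates of c • x
      have hco : ∀ (c : ℂ) (k : Fin N),
          ((c • x) k).re = c.re * (x k).re ∧ ((c • x) k).im = c.im * (x k).re := by
        intro c k
        have him0 := (hx k).2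
        constructor
        · simp [Pi.smul_apply, smul_eq_mul, Complex.mul_re, him0]
        · simp [Pi.smul_apply, smul_eq_mul, Complex.mul_im, him0]
      -- the scalar computations
      have hsum : ∀ c : ℂ, (inner ℂ u ((f (c • x) + ContinuousLinearMap.adjoint (f (c • x))) u) : ℂ)
          = g c + (starRingEnd ℂ) (g c) := by
        intro c
        simp only [hg, ContinuousLinearMap.add_apply, inner_add_right, adjoint_inner_right,
          inner_conj_symm]
      have hdif : ∀ c : ℂ,
          (inner ℂ u ((Complex.I • (ContinuousLinearMap.adjoint (f (c • x)) - f (c • x))) u) : ℂ)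
          = Complex.I * ((starRingEnd ℂ) (g c) - g c) := by
        intro c
        simp only [hg, ContinuousLinearMap.smul_apply, inner_smul_right,
          ContinuousLinearMap.sub_apply, inner_sub_right, adjoint_inner_right, inner_conj_symm]
      have hsign1 : ∀ c : ℂ, 0 < c.re → 0 ≤ (g c).re := by
        intro c hc
        have hp := (h1 (c • x) (fun k => by rw [(hco c k).1]; exact mul_pos hc (hx k).1
          )).re_inner_nonneg_right u
        rw [RCLike.re_to_complex, hsum c] at hp
        simp only [Complex.add_re, Complex.conj_re] at hp
        linarith
      have hsign2 : ∀ c : ℂ, c.re < 0 → (g c).re ≤ 0 := by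
        intro c hc
        have hp := (h2 (c • x) (fun k => by
          rw [(hco c k).1]; exact mul_neg_of_neg_of_pos hc (hx k).1)).re_inner_nonneg_right u
        rw [ContinuousLinearMap.neg_apply, inner_neg_right, RCLike.re_to_complex,
          Complex.neg_re, hsum c] at hp
        simp only [Complex.add_re, Complex.conj_re] at hp
        linarith
      have hsign3 : ∀ c : ℂ, 0 < c.im → 0 ≤ (g c).im := by
        intro c hc
        have hp := (h3 (c • x) (fun k => by
          rw [(hco c k).2]; exact mul_pos hc (hx k).1)).re_inner_nonneg_right u
        rw [RCLike.re_to_complex, hdif c] at hp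
        simp only [Complex.mul_re, Complex.I_re, Complex.I_im, Complex.sub_re, Complex.sub_im,
          Complex.conj_re, Complex.conj_im] at hp
        linarith
      have hsign4 : ∀ c : ℂ, c.im < 0 → (g c).im ≤ 0 := by
        intro c hc
        have hp := (h4 (c • x) (fun k => by
          rw [(hco c k).2]; exact mul_neg_of_neg_of_pos hc (hx k).1)).re_inner_nonneg_right u
        rw [ContinuousLinearMap.neg_apply, inner_neg_right, RCLike.re_to_complex,
          Complex.neg_re, hdif c] at hp
        simp only [Complex.mul_re, Complex.I_re, Complex.I_im, Complex.sub_re, Complex.sub_im,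
          Complex.conj_re, Complex.conj_im] at hp
        linarith
      have hlin := quadrant_lemma hgd hsign1 hsign2 hsign3 hsign4 μ hμ
      simp only [hg, one_smul] at hlin
      rw [ContinuousLinearMap.sub_apply, inner_sub_right, ContinuousLinearMap.smul_apply,
        inner_smul_right, hlin, sub_self]
    have hT := (inner_map_self_eq_zero (↑(f (μ • x) - μ • f x) : U →ₗ[ℂ] U)).1 (fun v => by
      rw [← inner_conj_symm]
      simp only [ContinuousLinearMap.coe_coe]
      rw [key v, map_zero])
    have hzero : (f (μ • x) - μ • f x) = 0 := by
      ext v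
      have := LinearMap.congr_fun hT v
      simpa using this
    exact sub_eq_zero.mp hzero
  intro l hl z hz
  set F : (Fin N → ℂ) → (U →L[ℂ] U) := fun y => f (l • y) - l • f y with hFdef
  have hFd : ∀ y ∈ Omega N, DifferentiableAt ℂ F y := by
    intro y hy
    have d1 : DifferentiableAt ℂ (fun y : Fin N → ℂ => l • y) y :=
      differentiableAt_id.const_smul l
    have d2 : DifferentiableAt ℂ f (l • y) :=
      hf.differentiableAt (hOpen.mem_nhds (omega_smul hy hl))
    exact (d2.comp y d1).sub ((hf.differentiableAt (hOpen.mem_nhds hy)).const_smul l)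
  have stepB : ∀ y : Fin N → ℂ, (∀ k, 0 < (y k).re) → F y = 0 := by
    have main : ∀ j : ℕ, ∀ y : Fin N → ℂ, (∀ k, 0 < (y k).re) →
        (∀ k : Fin N, j ≤ (k : ℕ) → (y k).im = 0) → F y = 0 := by
      intro j
      induction j with
      | zero =>
        intro y hre him
        simp only [hFdef]
        rw [stepA l hl y (fun k => ⟨hre k, him k (Nat.zero_le _)⟩), sub_self]
      | succ j ih =>
        intro y hre him
        by_cases hjN : j < N
        · set jf : Fin N := ⟨j, hjN⟩ with hjf
          have hupd : ∀ w : ℂ, Function.update y jf w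
              = y + (w - y jf) • (Pi.single jf 1 : Fin N → ℂ) := by
            intro w; funext k
            by_cases hk : k = jf
            · subst hk
              simp only [Function.update_self, Pi.add_apply, Pi.smul_apply, Pi.single_eq_same,
                smul_eq_mul, mul_one]
              ring
            · simp [Function.update_of_ne hk, Pi.single_eq_of_ne hk]
          have hGd : DifferentiableOn ℂ (fun w => F (Function.update y jf w))
              {w : ℂ | 0 < w.re} := by
            intro w hw
            have hmem : Function.update y jf w ∈ Omega N := by
              apply pi_mem_omega
              intro k
              by_cases hk : k = jf
              · subst hk; rw [Function.update_self]; exact hw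
              · rw [Function.update_of_ne hk]; exact hre k
            have d1 : DifferentiableAt ℂ (fun w : ℂ => Function.update y jf w) w := by
              have : (fun w : ℂ => Function.update y jf w)
                  = fun w : ℂ => y + (w - y jf) • (Pi.single jf 1 : Fin N → ℂ) := funext hupd
              rw [this]
              exact ((differentiableAt_id.sub_const (y jf)).smul_const _).const_add y
            exact ((hFd _ hmem).comp w d1).differentiableWithinAt
          have hG0 : ∀ r : ℝ, 1 < r → r < 2 →
              (fun w => F (Function.update y jf w)) (r:ℂ) = 0 := by
            intro r h1r hr2
            apply ih
            · intro k
              by_cases hk : k = jf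
              · subst hk; rw [Function.update_self]
                simpa using (by linarith : (0:ℝ) < r)
              · rw [Function.update_of_ne hk]; exact hre k
            · intro k hk
              by_cases hk' : k = jf
              · subst hk'; rw [Function.update_self]; simp
              · rw [Function.update_of_ne hk']
                have hne : (k : ℕ) ≠ j := by
                  intro h; exact hk' (Fin.ext (by simp [hjf, h]))
                exact him k (by omega)
          have heq := eqOn_zero_one_dim (isOpen_lt continuous_const Complex.continuous_re)
            (convex_halfSpace_re_gt 0).isPreconnected
            (by simp : (1:ℂ) ∈ {w : ℂ | 0 < w.re}) hGd hG0
          have hy := heq (show y jf ∈ {w : ℂ | 0 < w.re} from hre jf)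
          simpa [Function.update_eq_self] using hy
        · refine ih y hre fun k hk => ?_
          exact absurd (lt_of_lt_of_le k.isLt (Nat.le_of_not_lt hjN)) (Nat.not_lt.2 hk)
    intro y hre
    exact main N y hre fun k hk => absurd k.isLt (Nat.not_lt.2 hk)
  obtain ⟨l0, hl0, hw⟩ := hz
  choose w hwre hzw using hw
  have hl0ne : l0 ≠ 0 := by
    intro h; rw [h] at hl0; simp at hl0
  have hzeq : z = l0 • w := by
    funext k; rw [hzw k]; rfl
  have hG2d : DifferentiableOn ℂ (fun μ => F (μ • w)) {(0:ℂ)}ᶜ := by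
    intro μ hμ
    have hmem : μ • w ∈ Omega N := omega_smul (pi_mem_omega hwre) hμ
    exact ((hFd _ hmem).comp μ (differentiableAt_id.smul_const w)).differentiableWithinAt
  have hG20 : ∀ r : ℝ, 1 < r → r < 2 → (fun μ => F (μ • w)) (r:ℂ) = 0 := by
    intro r h1r hr2
    apply stepB
    intro k
    have hco : (((r:ℂ) • w) k).re = r * (w k).re := by
      simp [Pi.smul_apply, smul_eq_mul, Complex.mul_re]
    rw [hco]
    exact mul_pos (by linarith) (hwre k)
  have heq := eqOn_zero_one_dim isOpen_compl_singleton
    ((isConnected_compl_singleton_of_one_lt_rank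
      (by rw [Complex.rank_real_complex]; norm_num) (0:ℂ)).isPreconnected)
    (by simp : (1:ℂ) ∈ ({(0:ℂ)}ᶜ : Set ℂ)) hG2d hG20
  have hFz := heq (show l0 ∈ ({(0:ℂ)}ᶜ : Set ℂ) from hl0ne)
  simp only at hFz
  rw [← hzeq] at hFz
  exact sub_eq_zero.mp hFz
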